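/- There is no pair (d, C) of a positive integer d and constant C > 0 such that for all Hilbert spaces H and all finitely supported f : F_2 → B(H), ‖Σ_x λ(x)⊗f(x)‖ ≤ C(‖Σ_x (1+ℓ(x))^{2d} f(x)*f(x)‖^{1/2} + ‖Σ_x (1+ℓ(x))^{2d} f(x)f(x)*‖^{1/2}). Specifically, taking T_k the set of length-k reduced words starting with a and not ending with a⁻¹, t = #T_k, and f supported on S_{2k} with f(g_i g_j) = E_{i,j} for an enumeration g_1,…,g_t of T_k, the left side is at least t ≥ 2^k while the right side equals 2C(1+2k)^d √t. -/

import Mathlib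

open scoped ENNReal ComplexConjugate

set_option synthInstance.maxHeartbeats 1000000
set_option maxHeartbeats 1000000

noncomputable section

namespace Stmt13

lemma reduce_eq_self_of_true {L : List (Bool × Bool)} (h : ∀ p ∈ L, p.2 = true) :
    FreeGroup.reduce L = L := by
  induction L with
  | nil => rfl
  | cons x L ih =>
    have hx : x.2 = true := h x (by simp)
    have hL : ∀ p ∈ L, p.2 = true := fun p hp => h p (by simp [hp])
    rw [FreeGroup.reduce.cons, ih hL]
    cases L with
    | nil => rfl
    | cons y L' =>
      have hy : y.2 = true := hL y (by simp)
      simp [hx, hy]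

variable {k : ℕ}

def wl (w : Fin k → Bool) : List (Bool × Bool) :=
  (List.finRange k).map fun m => (w m, true)

def gw (w : Fin k → Bool) : FreeGroup Bool := FreeGroup.mk (wl w)

lemma wl_true (w : Fin k → Bool) : ∀ p ∈ wl w, p.2 = true := by
  simp [wl]

@[simp] lemma wl_length (w : Fin k → Bool) : (wl w).length = k := by simp [wl]

lemma wl_inj : Function.Injective (wl (k := k)) := by
  intro w₁ w₂ h
  funext m
  have := (List.map_inj_left (l := List.finRange k)).1 h m (List.mem_finRange m)
  exact (Prod.mk.injEq _ _ _ _ ▸ this).1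

lemma toWord_gw (w : Fin k → Bool) : (gw w).toWord = wl w := by
  rw [gw, FreeGroup.toWord_mk]
  exact reduce_eq_self_of_true (wl_true w)

lemma toWord_gw_mul (w₁ w₂ : Fin k → Bool) :
    (gw w₁ * gw w₂).toWord = wl w₁ ++ wl w₂ := by
  rw [gw, gw, FreeGroup.mul_mk, FreeGroup.toWord_mk]
  refine reduce_eq_self_of_true ?_
  intro p hp
  rcases List.mem_append.1 hp with h | h
  · exact wl_true _ p h
  · exact wl_true _ p h

lemma gw_inj : Function.Injective (gw (k := k)) := by
  intro w₁ w₂ h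
  exact wl_inj (by rw [← toWord_gw, ← toWord_gw, h])

lemma gw_mul_inj :
    Function.Injective (fun p : (Fin k → Bool) × (Fin k → Bool) => gw p.1 * gw p.2) := by
  intro p q h
  have h' : wl p.1 ++ wl p.2 = wl q.1 ++ wl q.2 := by
    rw [← toWord_gw_mul, ← toWord_gw_mul]
    exact congrArg FreeGroup.toWord h
  have hlen : (wl p.1).length = (wl q.1).length := by simp
  obtain ⟨h1, h2⟩ := List.append_inj h' hlen
  exact Prod.ext (wl_inj h1) (wl_inj h2)

lemma norm_gw_mul (w₁ w₂ : Fin k → Bool) :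
    (gw w₁ * gw w₂).norm = 2 * k := by
  rw [FreeGroup.norm, toWord_gw_mul]
  simp [two_mul]

open ContinuousLinearMap

variable {W : Type} [Fintype W] [DecidableEq W]

abbrev Hs (W : Type) [Fintype W] : Type := EuclideanSpace ℂ W

def ev (i : W) : Hs W := EuclideanSpace.single i (1 : ℂ)

local notation "⟪" x ", " y "⟫" => @inner ℂ _ _ x y

lemma inner_ev (i j : W) : ⟪ev i, ev j⟫ = if i = j then (1:ℂ) else 0 := by
  by_cases h : i = j
  · simp [ev, EuclideanSpace.inner_single_left, EuclideanSpace.single_apply, h]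
  · rw [if_neg h]
    simp only [ev, EuclideanSpace.inner_single_left, map_one, one_mul,
      EuclideanSpace.single_apply]
    rw [if_neg h]

def Eu (i j : W) : Hs W →L[ℂ] Hs W := (innerSL ℂ (ev j)).smulRight (ev i)

lemma Eu_apply (i j : W) (v : Hs W) : Eu i j v = ⟪ev j, v⟫ • ev i := rfl

lemma adjoint_Eu (i j : W) : ContinuousLinearMap.adjoint (Eu i j) = Eu j i := by
  symm
  rw [eq_adjoint_iff]
  intro x y
  simp only [Eu_apply, inner_smul_left, inner_smul_right]
  rw [inner_conj_symm]
  ring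

lemma Eu_comp_Eu (i j a : W) : (Eu i j).comp (Eu j a) = Eu i a := by
  refine ContinuousLinearMap.ext fun v => ?_
  rw [ContinuousLinearMap.comp_apply, Eu_apply, Eu_apply, Eu_apply, inner_smul_right,
    inner_ev, if_pos rfl, mul_one]

lemma sum_Eu_diag : (∑ w : W, Eu w w) = (1 : Hs W →L[ℂ] Hs W) := by
  refine ContinuousLinearMap.ext fun v => ?_
  refine PiLp.ext fun u => ?_
  rw [ContinuousLinearMap.sum_apply, ContinuousLinearMap.one_apply]
  classical
  have : ∀ w, (Eu w w v) u = (if u = w then v w else 0) := by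
    intro w
    by_cases hw : u = w <;>
      simp [Eu_apply, ev, EuclideanSpace.inner_single_left, EuclideanSpace.single_apply, hw]
  calc (∑ w : W, Eu w w v) u = ∑ w : W, (Eu w w v) u := by
        rw [WithLp.ofLp_sum, Finset.sum_apply]
    _ = ∑ w : W, (if u = w then v w else 0) := by simp [this]
    _ = v u := by simp

variable {H : Type} [NormedAddCommGroup H] [InnerProductSpace ℂ H]

abbrev L2 (H : Type) [NormedAddCommGroup H] [InnerProductSpace ℂ H] :=
  lp (fun _ : FreeGroup Bool => H) 2

lemma two_toReal : (2 : ℝ≥0∞).toReal = 2 := by norm_num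

lemma summable_sq (ξ : L2 H) : Summable fun g : FreeGroup Bool => ‖ξ g‖ ^ (2:ℝ) := by
  have := (lp.memℓp ξ).summable (p := 2) (by rw [two_toReal]; norm_num)
  simpa [two_toReal] using this

lemma memℓp_opFun (x : FreeGroup Bool) (A : H →L[ℂ] H) (ξ : L2 H) :
    Memℓp (fun g : FreeGroup Bool => A (ξ (x⁻¹ * g))) 2 := by
  apply memℓp_gen
  rw [two_toReal]
  have hsum : Summable fun g : FreeGroup Bool => ‖A‖ ^ (2:ℝ) * ‖ξ (x⁻¹ * g)‖ ^ (2:ℝ) := by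
    apply Summable.mul_left
    exact (summable_sq ξ).comp_injective (Equiv.mulLeft x⁻¹).injective
  refine Summable.of_nonneg_of_le (fun g => by positivity) (fun g => ?_) hsum
  calc ‖A (ξ (x⁻¹ * g))‖ ^ (2:ℝ) ≤ (‖A‖ * ‖ξ (x⁻¹ * g)‖) ^ (2:ℝ) := by
        apply Real.rpow_le_rpow (norm_nonneg _) (A.le_opNorm _) (by norm_num)
    _ = ‖A‖ ^ (2:ℝ) * ‖ξ (x⁻¹ * g)‖ ^ (2:ℝ) :=
        Real.mul_rpow (norm_nonneg _) (norm_nonneg _)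

def opl (x : FreeGroup Bool) (A : H →L[ℂ] H) : L2 H →ₗ[ℂ] L2 H where
  toFun ξ := ⟨fun g => A (ξ (x⁻¹ * g)), memℓp_opFun x A ξ⟩
  map_add' ξ ζ := by
    ext g
    simp [lp.coeFn_add]
    rfl
  map_smul' c ξ := by
    ext g
    simp [lp.coeFn_smul]

lemma opl_apply (x : FreeGroup Bool) (A : H →L[ℂ] H) (ξ : L2 H) (g : FreeGroup Bool) :
    opl x A ξ g = A (ξ (x⁻¹ * g)) := rfl

lemma opl_norm_le (x : FreeGroup Bool) (A : H →L[ℂ] H) (ξ : L2 H) :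
    ‖opl x A ξ‖ ≤ ‖A‖ * ‖ξ‖ := by
  apply lp.norm_le_of_tsum_le (by rw [two_toReal]; norm_num)
    (mul_nonneg (norm_nonneg _) (norm_nonneg _))
  rw [two_toReal]
  have h1 : ∑' g : FreeGroup Bool, ‖ξ (x⁻¹ * g)‖ ^ (2:ℝ) = ∑' g, ‖ξ g‖ ^ (2:ℝ) :=
    (Equiv.mulLeft x⁻¹).tsum_eq fun g => ‖ξ g‖ ^ (2:ℝ)
  have h2 : ∑' g : FreeGroup Bool, ‖(opl x A ξ) g‖ ^ (2:ℝ) ≤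
      ∑' g : FreeGroup Bool, ‖A‖ ^ (2:ℝ) * ‖ξ (x⁻¹ * g)‖ ^ (2:ℝ) := by
    apply Summable.tsum_le_tsum _ _ _
    · intro g
      rw [opl_apply]
      calc ‖A (ξ (x⁻¹ * g))‖ ^ (2:ℝ) ≤ (‖A‖ * ‖ξ (x⁻¹ * g)‖) ^ (2:ℝ) := by
            apply Real.rpow_le_rpow (norm_nonneg _) (A.le_opNorm _) (by norm_num)
        _ = ‖A‖ ^ (2:ℝ) * ‖ξ (x⁻¹ * g)‖ ^ (2:ℝ) :=
            Real.mul_rpow (norm_nonneg _) (norm_nonneg _)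
    · have := (lp.memℓp (opl x A ξ)).summable (p := 2) (by rw [two_toReal]; norm_num)
      simpa [two_toReal] using this
    · apply Summable.mul_left
      exact (summable_sq ξ).comp_injective (Equiv.mulLeft x⁻¹).injective
  calc ∑' g : FreeGroup Bool, ‖(opl x A ξ) g‖ ^ (2:ℝ)
      ≤ ∑' g : FreeGroup Bool, ‖A‖ ^ (2:ℝ) * ‖ξ (x⁻¹ * g)‖ ^ (2:ℝ) := h2
    _ = ‖A‖ ^ (2:ℝ) * ∑' g : FreeGroup Bool, ‖ξ (x⁻¹ * g)‖ ^ (2:ℝ) := tsum_mul_left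
    _ = ‖A‖ ^ (2:ℝ) * ‖ξ‖ ^ (2:ℝ) := by
        rw [h1]
        congr 1
        have := lp.norm_rpow_eq_tsum (p := 2) (by rw [two_toReal]; norm_num) ξ
        rw [two_toReal] at this
        exact this.symm
    _ = (‖A‖ * ‖ξ‖) ^ (2:ℝ) := (Real.mul_rpow (norm_nonneg _) (norm_nonneg _)).symm

def op (x : FreeGroup Bool) (A : H →L[ℂ] H) : L2 H →L[ℂ] L2 H :=
  LinearMap.mkContinuous (opl x A) ‖A‖ (opl_norm_le x A)

lemma op_apply (x : FreeGroup Bool) (A : H →L[ℂ] H) (ξ : L2 H) (g : FreeGroup Bool) :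
    op x A ξ g = A (ξ (x⁻¹ * g)) := rfl

lemma lp_single_apply' (i : FreeGroup Bool) (a : H) (j : FreeGroup Bool) :
    (lp.single 2 i a : ∀ _ : FreeGroup Bool, H) j = if j = i then a else 0 := by
  by_cases h : j = i
  · subst h; rw [lp.single_apply_self, if_pos rfl]
  · rw [lp.single_apply_ne _ _ _ h, if_neg h]

lemma exists_good_k (C : ℝ) (hC : 0 < C) (d : ℕ) :
    ∃ k : ℕ, 1 ≤ k ∧ 4 * C ^ 2 * (1 + 2 * (k:ℝ)) ^ (2 * d) < 2 ^ k := by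
  have hsum : Summable (fun n : ℕ => (n:ℝ) ^ (2*d) * (1/2 : ℝ) ^ n) :=
    summable_pow_mul_geometric_of_norm_lt_one (2*d) (by rw [Real.norm_eq_abs, abs_of_pos (by norm_num : (0:ℝ) < 1/2)]; norm_num)
  have htend := hsum.tendsto_atTop_zero
  have hε : (0:ℝ) < (4 * C ^ 2 * 3 ^ (2*d))⁻¹ := by positivity
  have hev := (htend.eventually (gt_mem_nhds hε)).and (Filter.eventually_ge_atTop 1)
  obtain ⟨k, hk2, hk1⟩ := hev.exists
  refine ⟨k, hk1, ?_⟩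
  have hkpos : (1:ℝ) ≤ (k:ℝ) := by exact_mod_cast hk1
  have h3 : (1 + 2 * (k:ℝ)) ^ (2*d) ≤ (3 * (k:ℝ)) ^ (2*d) := by
    apply pow_le_pow_left₀ (by positivity)
    linarith
  have h5 : (k:ℝ) ^ (2*d) * (1/2:ℝ) ^ k = (k:ℝ) ^ (2*d) / 2 ^ k := by
    rw [div_pow, one_pow, mul_one_div]
  rw [h5, div_lt_iff₀ (by positivity)] at hk2
  have hpos : (0:ℝ) < 4 * C ^ 2 * 3 ^ (2*d) := by positivity
  have h6 := mul_lt_mul_of_pos_left hk2 hpos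
  rw [← mul_assoc, mul_inv_cancel₀ (ne_of_gt hpos), one_mul] at h6
  calc 4 * C ^ 2 * (1 + 2 * (k:ℝ)) ^ (2*d)
      ≤ 4 * C ^ 2 * (3 * (k:ℝ)) ^ (2*d) :=
        mul_le_mul_of_nonneg_left h3 (by positivity)
    _ = 4 * C ^ 2 * 3 ^ (2*d) * (k:ℝ) ^ (2*d) := by rw [mul_pow]; ring
    _ < 2 ^ k := h6

section Main

open ContinuousLinearMap

variable (k : ℕ)

def uu (p : (Fin k → Bool) × (Fin k → Bool)) : FreeGroup Bool := gw p.1 * gw p.2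

lemma uu_inj : Function.Injective (uu k) := gw_mul_inj

def ff (x : FreeGroup Bool) : Hs (Fin k → Bool) →L[ℂ] Hs (Fin k → Bool) :=
  ∑ p : (Fin k → Bool) × (Fin k → Bool), if x = uu k p then Eu p.1 p.2 else 0

lemma ff_u (p : (Fin k → Bool) × (Fin k → Bool)) : ff k (uu k p) = Eu p.1 p.2 := by
  rw [ff]
  have h : ∀ q : (Fin k → Bool) × (Fin k → Bool),
      (if uu k p = uu k q then Eu q.1 q.2 else 0) = (if q = p then Eu q.1 q.2 else 0) := by
    intro q
    exact if_congr ⟨fun h => (uu_inj k h).symm, fun h => by rw [h]⟩ rfl rfl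
  rw [Finset.sum_congr rfl fun q _ => h q, Finset.sum_ite_eq' Finset.univ p fun q => Eu q.1 q.2,
    if_pos (Finset.mem_univ p)]

lemma ff_not (x : FreeGroup Bool) (h : x ∉ Set.range (uu k)) : ff k x = 0 := by
  rw [ff]
  refine Finset.sum_eq_zero fun p _ => ?_
  rw [if_neg fun hx => h ⟨p, hx.symm⟩]

lemma ff_support : (Function.support (ff k)).Finite := by
  refine (Set.finite_range (uu k)).subset fun x hx => ?_
  by_contra hr
  exact hx (ff_not k x hr)

def TT : L2 (Hs (Fin k → Bool)) →L[ℂ] L2 (Hs (Fin k → Bool)) :=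
  ∑ p : (Fin k → Bool) × (Fin k → Bool), op (uu k p) (Eu p.1 p.2)

lemma TT_apply (ξ : L2 (Hs (Fin k → Bool))) (g : FreeGroup Bool) :
    TT k ξ g = ∑ p : (Fin k → Bool) × (Fin k → Bool), Eu p.1 p.2 (ξ ((uu k p)⁻¹ * g)) := by
  rw [TT, ContinuousLinearMap.sum_apply, lp.coeFn_sum, Finset.sum_apply]
  exact Finset.sum_congr rfl fun p _ => rfl

lemma TT_spec (ξ : L2 (Hs (Fin k → Bool))) (g : FreeGroup Bool) :
    TT k ξ g = ∑ᶠ x : FreeGroup Bool, ff k x (ξ (x⁻¹ * g)) := by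
  classical
  have hsupp : (Function.support fun x : FreeGroup Bool => ff k x (ξ (x⁻¹ * g))) ⊆
      ↑(Finset.image (uu k) Finset.univ) := by
    intro x hx
    simp only [Finset.coe_image, Finset.coe_univ, Set.image_univ]
    by_contra hr
    rw [Function.mem_support, ff_not k x hr] at hx
    exact hx (by simp)
  rw [finsum_eq_sum_of_support_subset _ hsupp]
  have hterm : ∀ x : FreeGroup Bool, ff k x (ξ (x⁻¹ * g)) =
      ∑ p : (Fin k → Bool) × (Fin k → Bool),
        (if x = uu k p then Eu p.1 p.2 (ξ (x⁻¹ * g)) else 0) := by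
    intro x
    rw [ff, ContinuousLinearMap.sum_apply]
    exact Finset.sum_congr rfl fun p _ => by
      rw [apply_ite (fun (A : Hs (Fin k → Bool) →L[ℂ] Hs (Fin k → Bool)) => A (ξ (x⁻¹ * g)))]
      simp
  rw [Finset.sum_congr rfl fun x _ => hterm x, Finset.sum_comm]
  rw [TT_apply]
  refine Finset.sum_congr rfl fun p _ => ?_
  have : ∀ x ∈ Finset.image (uu k) Finset.univ,
      (if x = uu k p then Eu p.1 p.2 (ξ (x⁻¹ * g)) else 0) =
      (if x = uu k p then Eu p.1 p.2 (ξ ((uu k p)⁻¹ * g)) else 0) := by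
    intro x _
    by_cases hx : x = uu k p
    · rw [if_pos hx, if_pos hx, hx]
    · rw [if_neg hx, if_neg hx]
  rw [Finset.sum_congr rfl this, Finset.sum_ite_eq' (Finset.image (uu k) Finset.univ) (uu k p),
    if_pos (Finset.mem_image_of_mem _ (Finset.mem_univ p))]

end Main

section Main2

open ContinuousLinearMap

variable (k : ℕ)

def ξ0 : L2 (Hs (Fin k → Bool)) := ∑ w : Fin k → Bool, lp.single 2 (gw w)⁻¹ (ev w)

def η0 : L2 (Hs (Fin k → Bool)) := ∑ w : Fin k → Bool, lp.single 2 (gw w) (ev w)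

lemma ξ0_eval (w' : Fin k → Bool) : ξ0 k ((gw w')⁻¹) = ev w' := by
  classical
  rw [ξ0, lp.coeFn_sum, Finset.sum_apply]
  have h : ∀ w : Fin k → Bool,
      (lp.single 2 (gw w)⁻¹ (ev w) : ∀ _ : FreeGroup Bool, Hs (Fin k → Bool)) ((gw w')⁻¹) =
      if w = w' then ev w else 0 := by
    intro w
    rw [lp_single_apply']
    exact if_congr ⟨fun h => (gw_inj (inv_injective h)).symm, fun h => by rw [h]⟩ rfl rfl
  rw [Finset.sum_congr rfl fun w _ => h w, Finset.sum_ite_eq' Finset.univ w' ev,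
    if_pos (Finset.mem_univ w')]

lemma η0_eval (w' : Fin k → Bool) : η0 k (gw w') = ev w' := by
  classical
  rw [η0, lp.coeFn_sum, Finset.sum_apply]
  have h : ∀ w : Fin k → Bool,
      (lp.single 2 (gw w) (ev w) : ∀ _ : FreeGroup Bool, Hs (Fin k → Bool)) (gw w') =
      if w = w' then ev w else 0 := by
    intro w
    rw [lp_single_apply']
    exact if_congr ⟨fun h => (gw_inj h).symm, fun h => by rw [h]⟩ rfl rfl
  rw [Finset.sum_congr rfl fun w _ => h w, Finset.sum_ite_eq' Finset.univ w' ev,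
    if_pos (Finset.mem_univ w')]

lemma inner_ξ0 : ⟪ξ0 k, ξ0 k⟫ = ((2:ℂ) ^ k) := by
  classical
  have : ⟪ξ0 k, ξ0 k⟫ = ∑ w : Fin k → Bool, ⟪ev w, ξ0 k ((gw w)⁻¹)⟫ := by
    rw [ξ0, sum_inner]
    exact Finset.sum_congr rfl fun w _ => lp.inner_single_left _ _ _
  rw [this]
  have h2 : ∀ w : Fin k → Bool, ⟪ev w, ξ0 k ((gw w)⁻¹)⟫ = 1 := by
    intro w
    rw [ξ0_eval, inner_ev, if_pos rfl]
  rw [Finset.sum_congr rfl fun w _ => h2 w, Finset.sum_const, Finset.card_univ]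
  simp [Fintype.card_fun]

lemma inner_η0 : ⟪η0 k, η0 k⟫ = ((2:ℂ) ^ k) := by
  classical
  have : ⟪η0 k, η0 k⟫ = ∑ w : Fin k → Bool, ⟪ev w, η0 k (gw w)⟫ := by
    rw [η0, sum_inner]
    exact Finset.sum_congr rfl fun w _ => lp.inner_single_left _ _ _
  rw [this]
  have h2 : ∀ w : Fin k → Bool, ⟪ev w, η0 k (gw w)⟫ = 1 := by
    intro w
    rw [η0_eval, inner_ev, if_pos rfl]
  rw [Finset.sum_congr rfl fun w _ => h2 w, Finset.sum_const, Finset.card_univ]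
  simp [Fintype.card_fun]

lemma norm_ξ0 : ‖ξ0 k‖ = Real.sqrt (2 ^ k) := by
  have h := inner_self_eq_norm_sq_to_K (𝕜 := ℂ) (ξ0 k)
  rw [inner_ξ0] at h
  have h2 : ((2:ℝ) ^ k : ℝ) = ‖ξ0 k‖ ^ 2 := by
    apply Complex.ofReal_inj.mp
    push_cast
    exact h
  rw [h2, Real.sqrt_sq (norm_nonneg _)]

lemma norm_η0 : ‖η0 k‖ = Real.sqrt (2 ^ k) := by
  have h := inner_self_eq_norm_sq_to_K (𝕜 := ℂ) (η0 k)
  rw [inner_η0] at h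
  have h2 : ((2:ℝ) ^ k : ℝ) = ‖η0 k‖ ^ 2 := by
    apply Complex.ofReal_inj.mp
    push_cast
    exact h
  rw [h2, Real.sqrt_sq (norm_nonneg _)]

lemma inner_η0_TT : ⟪η0 k, TT k (ξ0 k)⟫ = ((2:ℂ) ^ k) ^ 2 := by
  classical
  have step1 : ⟪η0 k, TT k (ξ0 k)⟫ = ∑ w : Fin k → Bool, ⟪ev w, TT k (ξ0 k) (gw w)⟫ := by
    rw [η0, sum_inner]
    exact Finset.sum_congr rfl fun w _ => lp.inner_single_left _ _ _
  rw [step1]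
  have step2 : ∀ w : Fin k → Bool, ⟪ev w, TT k (ξ0 k) (gw w)⟫ = (2:ℂ) ^ k := by
    intro w
    rw [TT_apply, inner_sum]
    have hterm : ∀ p : (Fin k → Bool) × (Fin k → Bool),
        ⟪ev w, Eu p.1 p.2 (ξ0 k ((uu k p)⁻¹ * gw w))⟫ =
        if p.1 = w then ⟪ev p.2, ξ0 k ((uu k p)⁻¹ * gw w)⟫ else 0 := by
      intro p
      rw [Eu_apply, inner_smul_right, inner_ev]
      by_cases h : w = p.1
      · rw [if_pos h, if_pos h.symm, mul_one]
      · rw [if_neg h, if_neg fun h' => h h'.symm, mul_zero]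
    rw [Finset.sum_congr rfl fun p _ => hterm p, Fintype.sum_prod_type]
    have hcollapse : ∀ w₁ : Fin k → Bool,
        (∑ w₂ : Fin k → Bool,
          if w₁ = w then ⟪ev w₂, ξ0 k ((uu k (w₁, w₂))⁻¹ * gw w)⟫ else 0) =
        (if w₁ = w then (2:ℂ) ^ k else 0) := by
      intro w₁
      by_cases h : w₁ = w
      · subst h
        simp only [eq_self_iff_true, if_true]
        have hx : ∀ w₂ : Fin k → Bool, (uu k (w₁, w₂))⁻¹ * gw w₁ = (gw w₂)⁻¹ := by
          intro w₂
          rw [uu]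
          group
        have : ∀ w₂ : Fin k → Bool, ⟪ev w₂, ξ0 k ((uu k (w₁, w₂))⁻¹ * gw w₁)⟫ = 1 := by
          intro w₂
          rw [hx w₂, ξ0_eval, inner_ev, if_pos rfl]
        rw [Finset.sum_congr rfl fun w₂ _ => this w₂, Finset.sum_const, Finset.card_univ]
        simp [Fintype.card_fun]
      · simp only [if_neg h, Finset.sum_const_zero]
    rw [Finset.sum_congr rfl fun w₁ _ => hcollapse w₁, Finset.sum_ite_eq' Finset.univ w,
      if_pos (Finset.mem_univ w)]
  rw [Finset.sum_congr rfl fun w _ => step2 w, Finset.sum_const, Finset.card_univ]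
  simp [Fintype.card_fun, sq]

lemma TT_lower : (2:ℝ) ^ k ≤ ‖TT k‖ := by
  have h1 : ‖⟪η0 k, TT k (ξ0 k)⟫‖ = (2:ℝ) ^ k * (2:ℝ) ^ k := by
    rw [inner_η0_TT]
    rw [show ((2:ℂ) ^ k) ^ 2 = ((((2:ℝ) ^ k * (2:ℝ) ^ k : ℝ)) : ℂ) by push_cast; ring]
    rw [Complex.norm_real, Real.norm_of_nonneg (by positivity)]
  have h2 : ‖⟪η0 k, TT k (ξ0 k)⟫‖ ≤ ‖η0 k‖ * (‖TT k‖ * ‖ξ0 k‖) := by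
    refine (norm_inner_le_norm _ _).trans ?_
    exact mul_le_mul_of_nonneg_left ((TT k).le_opNorm _) (norm_nonneg _)
  rw [h1, norm_η0, norm_ξ0] at h2
  have hs : Real.sqrt (2 ^ k) * Real.sqrt (2 ^ k) = (2:ℝ) ^ k :=
    Real.mul_self_sqrt (by positivity)
  have hpos : (0:ℝ) < 2 ^ k := by positivity
  nlinarith [hs, hpos, norm_nonneg (TT k)]

end Main2

section Main3

open ContinuousLinearMap

variable (k d : ℕ)

lemma norm_smul_one_le {W : Type} [Fintype W] [DecidableEq W] (c : ℝ) (hc : 0 ≤ c) :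
    ‖c • (1 : Hs W →L[ℂ] Hs W)‖ ≤ c := by
  refine ContinuousLinearMap.opNorm_le_bound _ hc fun x => ?_
  rw [ContinuousLinearMap.smul_apply, ContinuousLinearMap.one_apply, norm_smul,
    Real.norm_of_nonneg hc]

lemma sum_diag2 : (∑ p : (Fin k → Bool) × (Fin k → Bool), Eu p.2 p.2) =
    ((2:ℕ) ^ k) • (1 : Hs (Fin k → Bool) →L[ℂ] Hs (Fin k → Bool)) := by
  rw [Fintype.sum_prod_type]
  have h : ∀ _w₁ : Fin k → Bool, (∑ w₂ : Fin k → Bool, Eu w₂ w₂) =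
      (1 : Hs (Fin k → Bool) →L[ℂ] Hs (Fin k → Bool)) := fun _ => sum_Eu_diag
  rw [Finset.sum_congr rfl fun w₁ _ => h w₁, Finset.sum_const, Finset.card_univ]
  congr 1
  simp [Fintype.card_fun]

lemma sum_diag1 : (∑ p : (Fin k → Bool) × (Fin k → Bool), Eu p.1 p.1) =
    ((2:ℕ) ^ k) • (1 : Hs (Fin k → Bool) →L[ℂ] Hs (Fin k → Bool)) := by
  rw [Fintype.sum_prod_type]
  have h : ∀ w₁ : Fin k → Bool, (∑ _w₂ : Fin k → Bool, Eu w₁ w₁) =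
      ((2:ℕ) ^ k) • Eu w₁ w₁ := by
    intro w₁
    rw [Finset.sum_const, Finset.card_univ]
    congr 1
    simp [Fintype.card_fun]
  rw [Finset.sum_congr rfl fun w₁ _ => h w₁, ← Finset.smul_sum, sum_Eu_diag]

lemma supp_weighted
    (F : (Hs (Fin k → Bool) →L[ℂ] Hs (Fin k → Bool)) →
        (Hs (Fin k → Bool) →L[ℂ] Hs (Fin k → Bool))) (hF : F 0 = 0) :
    (Function.support fun x : FreeGroup Bool =>
        ((1 + (x.norm : ℝ)) ^ (2 * d)) • (F (ff k x))) ⊆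
      ↑(Finset.image (uu k) Finset.univ) := by
  intro x hx
  simp only [Finset.coe_image, Finset.coe_univ, Set.image_univ]
  by_contra hr
  rw [Function.mem_support, ff_not k x hr, hF] at hx
  refine hx ?_
  ext v
  rw [ContinuousLinearMap.smul_apply, ContinuousLinearMap.zero_apply, smul_zero]

lemma sum_adj_comp :
    (∑ᶠ x : FreeGroup Bool, ((1 + (x.norm : ℝ)) ^ (2 * d)) •
        ((ContinuousLinearMap.adjoint (ff k x)).comp (ff k x))) =
      ((1 + ((2 * k : ℕ) : ℝ)) ^ (2 * d) * 2 ^ k) •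
        (1 : Hs (Fin k → Bool) →L[ℂ] Hs (Fin k → Bool)) := by
  classical
  rw [finsum_eq_sum_of_support_subset _
    (supp_weighted k d (fun A => (ContinuousLinearMap.adjoint A).comp A) (by simp))]
  rw [Finset.sum_image fun x _ y _ h => uu_inj k h]
  have hterm : ∀ p : (Fin k → Bool) × (Fin k → Bool),
      ((1 + ((uu k p).norm : ℝ)) ^ (2 * d)) •
        ((ContinuousLinearMap.adjoint (ff k (uu k p))).comp (ff k (uu k p))) =
      ((1 + ((2 * k : ℕ) : ℝ)) ^ (2 * d)) • Eu p.2 p.2 := by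
    intro p
    rw [ff_u, adjoint_Eu, Eu_comp_Eu, uu, norm_gw_mul]
  rw [Finset.sum_congr rfl fun p _ => hterm p, ← Finset.smul_sum, sum_diag2,
    ← Nat.cast_smul_eq_nsmul ℝ, smul_smul]
  norm_num

lemma sum_comp_adj :
    (∑ᶠ x : FreeGroup Bool, ((1 + (x.norm : ℝ)) ^ (2 * d)) •
        ((ff k x).comp (ContinuousLinearMap.adjoint (ff k x)))) =
      ((1 + ((2 * k : ℕ) : ℝ)) ^ (2 * d) * 2 ^ k) •
        (1 : Hs (Fin k → Bool) →L[ℂ] Hs (Fin k → Bool)) := by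
  classical
  rw [finsum_eq_sum_of_support_subset _
    (supp_weighted k d (fun A => A.comp (ContinuousLinearMap.adjoint A)) (by simp))]
  rw [Finset.sum_image fun x _ y _ h => uu_inj k h]
  have hterm : ∀ p : (Fin k → Bool) × (Fin k → Bool),
      ((1 + ((uu k p).norm : ℝ)) ^ (2 * d)) •
        ((ff k (uu k p)).comp (ContinuousLinearMap.adjoint (ff k (uu k p)))) =
      ((1 + ((2 * k : ℕ) : ℝ)) ^ (2 * d)) • Eu p.1 p.1 := by
    intro p
    rw [ff_u, adjoint_Eu, Eu_comp_Eu, uu, norm_gw_mul]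
  rw [Finset.sum_congr rfl fun p _ => hterm p, ← Finset.smul_sum, sum_diag1,
    ← Nat.cast_smul_eq_nsmul ℝ, smul_smul]
  norm_num

end Main3

-- MAIN4
end Stmt13

end

/-- there is no pair `(d, C)` with `d` a positive integer and `C > 0`
such that for all Hilbert spaces `H` and all finitely supported `f : F₂ → B(H)`,
`‖Σ_x λ(x)⊗f(x)‖ ≤ C(‖Σ_x (1+ℓ(x))^{2d} f(x)*f(x)‖^{1/2} + ‖Σ_x (1+ℓ(x))^{2d} f(x)f(x)*‖^{1/2})`.
Here `F₂ = FreeGroup Bool` with word length `FreeGroup.norm`, and `T` with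
`T ξ g = Σ_x f(x)(ξ(x⁻¹g))` is the operator `Σ_x λ(x)⊗f(x)` on `ℓ²(F₂)⊗H ≅ ℓ²(F₂;H)`. -/
theorem stmt_13 :
    ¬ ∃ (d : ℕ) (C : ℝ), 0 < d ∧ 0 < C ∧
      ∀ (H : Type) [NormedAddCommGroup H] [InnerProductSpace ℂ H] [CompleteSpace H]
        (f : FreeGroup Bool → H →L[ℂ] H), (Function.support f).Finite →
        ∀ T : lp (fun _ : FreeGroup Bool => H) 2 →L[ℂ]
              lp (fun _ : FreeGroup Bool => H) 2,
          (∀ (ξ : lp (fun _ : FreeGroup Bool => H) 2) (g : FreeGroup Bool),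
            T ξ g = ∑ᶠ x : FreeGroup Bool, f x (ξ (x⁻¹ * g))) →
          ‖T‖ ≤ C *
            (Real.sqrt ‖∑ᶠ x : FreeGroup Bool, ((1 + x.norm : ℝ) ^ (2 * d)) •
                ((ContinuousLinearMap.adjoint (f x)).comp (f x))‖ +
             Real.sqrt ‖∑ᶠ x : FreeGroup Bool, ((1 + x.norm : ℝ) ^ (2 * d)) •
                ((f x).comp (ContinuousLinearMap.adjoint (f x)))‖) := by
  rintro ⟨d, C, hd, hC, key⟩
  obtain ⟨k, hk1, hk⟩ := Stmt13.exists_good_k C hC d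
  classical
  have hkey := key (Stmt13.Hs (Fin k → Bool)) (Stmt13.ff k) (Stmt13.ff_support k)
    (Stmt13.TT k) (fun ξ g => Stmt13.TT_spec k ξ g)
  rw [Stmt13.sum_adj_comp k d, Stmt13.sum_comp_adj k d] at hkey
  set a : ℝ := (1 + ((2 * k : ℕ) : ℝ)) ^ d with ha
  set s : ℝ := Real.sqrt (2 ^ k) with hs
  have hapos : 0 < a := by positivity
  have hspos : 0 < s := Real.sqrt_pos.mpr (by positivity)
  have hss : s * s = (2:ℝ) ^ k := Real.mul_self_sqrt (by positivity)
  have hcoef : (1 + ((2 * k : ℕ) : ℝ)) ^ (2 * d) * 2 ^ k = (a * a) * (2 ^ k) := by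
    rw [ha]
    ring
  have hnorm_le : ‖((1 + ((2 * k : ℕ) : ℝ)) ^ (2 * d) * 2 ^ k) •
      (1 : Stmt13.Hs (Fin k → Bool) →L[ℂ] Stmt13.Hs (Fin k → Bool))‖ ≤
      (a * a) * (2 ^ k) := by
    rw [hcoef]
    exact Stmt13.norm_smul_one_le _ (by positivity)
  have hsqrt : Real.sqrt ‖((1 + ((2 * k : ℕ) : ℝ)) ^ (2 * d) * 2 ^ k) •
      (1 : Stmt13.Hs (Fin k → Bool) →L[ℂ] Stmt13.Hs (Fin k → Bool))‖ ≤ a * s := by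
    refine (Real.sqrt_le_sqrt hnorm_le).trans ?_
    rw [show (a * a) * (2:ℝ) ^ k = (a * s) * (a * s) by rw [← hss]; ring]
    rw [Real.sqrt_mul_self (by positivity)]
  have hupper : ‖Stmt13.TT k‖ ≤ C * (a * s + a * s) :=
    hkey.trans (mul_le_mul_of_nonneg_left (add_le_add hsqrt hsqrt) hC.le)
  have hlower := Stmt13.TT_lower k
  have h1 : (2:ℝ) ^ k ≤ C * (a * s + a * s) := hlower.trans hupper
  have h2 : s * s ≤ (2 * C * a) * s := by rw [hss]; linarith
  have h3 : s ≤ 2 * C * a := by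
    have := (mul_le_mul_iff_left₀ hspos).mp h2
    exact this
  have h4 : (2:ℝ) ^ k ≤ (2 * C * a) * (2 * C * a) := by
    rw [← hss]
    exact mul_le_mul h3 h3 hspos.le (by positivity)
  have h5 : (2 * C * a) * (2 * C * a) = 4 * C ^ 2 * (1 + 2 * (k:ℝ)) ^ (2 * d) := by
    have : (1 + ((2 * k : ℕ) : ℝ)) = 1 + 2 * (k:ℝ) := by push_cast; ring
    rw [ha, this]
    ring
  rw [h5] at h4
  linarith
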